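/- Let d ≥ 1 and 1 ≤ N ≤ d. Let A : (N-subsets of Fin d) → ℂ with ∑_S |A(S)|² = 1, and let c : Fin d → ℂ with ∑_k |c(k)|² = 1. For an (N−1)-subset T of Fin d and k ∈ Fin d, define A(T ∪ {k}) := A(T ∪ {k}) if k ∉ T and 0 if k ∈ T. Then ∑_{T : (N−1)-subsets} |∑_{k=1}^d conj(A(T ∪ {k})) · c(k)|² ≤ (N/d)·(d − N + 1). -/

import Mathlib

open Finset
set_option maxHeartbeats 1000000

variable {d : ℕ}

lemma R1 {M : Type*} [AddCommMonoid M] (j : ℕ) (f : Fin d → Finset (Fin d) → M) :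
    ∑ S ∈ Finset.powersetCard (j+1) (Finset.univ : Finset (Fin d)), ∑ k ∈ S, f k (S.erase k)
      = ∑ T ∈ Finset.powersetCard j (Finset.univ : Finset (Fin d)), ∑ k ∈ Tᶜ, f k T := by
  rw [Finset.sum_sigma', Finset.sum_sigma']
  refine Finset.sum_nbij' (fun x => ⟨x.1.erase x.2, x.2⟩) (fun x => ⟨insert x.2 x.1, x.2⟩)
    ?_ ?_ ?_ ?_ ?_
  · rintro ⟨S, k⟩ h
    simp only [Finset.mem_sigma, mem_powersetCard_univ] at h ⊢
    obtain ⟨hS, hk⟩ := h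
    refine ⟨by simp [Finset.card_erase_of_mem hk, hS], by simp [Finset.mem_compl]⟩
  · rintro ⟨T, k⟩ h
    simp only [Finset.mem_sigma, mem_powersetCard_univ, Finset.mem_compl] at h ⊢
    obtain ⟨hT, hk⟩ := h
    exact ⟨by simp [Finset.card_insert_of_notMem hk, hT], Finset.mem_insert_self _ _⟩
  · rintro ⟨S, k⟩ h
    simp only [Finset.mem_sigma, mem_powersetCard_univ] at h
    simp [Finset.insert_erase h.2]
  · rintro ⟨T, k⟩ h
    simp only [Finset.mem_sigma, mem_powersetCard_univ, Finset.mem_compl] at h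
    simp [Finset.erase_insert h.2]
  · rintro ⟨S, k⟩ _
    rfl

lemma sum_ite_compl {M : Type*} [AddCommMonoid M] (T : Finset (Fin d)) (f : Fin d → M) :
    ∑ k, (if k ∈ T then 0 else f k) = ∑ k ∈ Tᶜ, f k := by
  classical
  rw [Finset.sum_ite, Finset.sum_const_zero, zero_add]
  congr 1
  ext k
  simp

noncomputable def Mop (c : Fin d → ℂ) (A : Finset (Fin d) → ℂ) (T : Finset (Fin d)) : ℂ :=
  ∑ k, (if k ∈ T then 0 else A (insert k T)) * c k

noncomputable def Madj (c : Fin d → ℂ) (χ : Finset (Fin d) → ℂ) (S : Finset (Fin d)) : ℂ :=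
  ∑ k ∈ S, (starRingEnd ℂ) (c k) * χ (S.erase k)

lemma Mop_eq_compl (c : Fin d → ℂ) (A : Finset (Fin d) → ℂ) (T : Finset (Fin d)) :
    Mop c A T = ∑ k ∈ Tᶜ, A (insert k T) * c k := by
  rw [Mop, ← sum_ite_compl]
  congr 1; ext k; split <;> simp

/-- adjointness -/
lemma adjoint_eq (c : Fin d → ℂ) (A χ : Finset (Fin d) → ℂ) (j : ℕ) :
    ∑ T ∈ Finset.powersetCard (j+1) (Finset.univ : Finset (Fin d)),
        (starRingEnd ℂ) (χ T) * Mop c A T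
      = ∑ S ∈ Finset.powersetCard (j+1+1) (Finset.univ : Finset (Fin d)),
        (starRingEnd ℂ) (Madj c χ S) * A S := by
  have h1 : ∀ T : Finset (Fin d), (starRingEnd ℂ) (χ T) * Mop c A T
      = ∑ k ∈ Tᶜ, (starRingEnd ℂ) (χ T) * A (insert k T) * c k := by
    intro T
    rw [Mop_eq_compl, Finset.mul_sum]
    exact Finset.sum_congr rfl fun k _ => by ring
  calc ∑ T ∈ Finset.powersetCard (j+1) (Finset.univ : Finset (Fin d)),
        (starRingEnd ℂ) (χ T) * Mop c A T
      = ∑ T ∈ Finset.powersetCard (j+1) (Finset.univ : Finset (Fin d)),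
          ∑ k ∈ Tᶜ, (starRingEnd ℂ) (χ T) * A (insert k T) * c k :=
        Finset.sum_congr rfl fun T _ => h1 T
    _ = ∑ S ∈ Finset.powersetCard (j+1+1) (Finset.univ : Finset (Fin d)),
          ∑ k ∈ S, (starRingEnd ℂ) (χ (S.erase k)) * A (insert k (S.erase k)) * c k :=
        (R1 (j+1) (fun k T => (starRingEnd ℂ) (χ T) * A (insert k T) * c k)).symm
    _ = ∑ S ∈ Finset.powersetCard (j+1+1) (Finset.univ : Finset (Fin d)),
          (starRingEnd ℂ) (Madj c χ S) * A S := by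
        refine Finset.sum_congr rfl fun S _ => ?_
        rw [Madj, map_sum, Finset.sum_mul]
        refine Finset.sum_congr rfl fun k hk => ?_
        rw [Finset.insert_erase hk]
        simp only [map_mul, RingHomCompTriple.comp_apply, Complex.conj_conj, RingHom.id_apply]
        ring

lemma star_identity_c (c : Fin d → ℂ) (χ : Finset (Fin d) → ℂ) (j : ℕ) :
    ∑ S ∈ Finset.powersetCard (j+1+1) (Finset.univ : Finset (Fin d)),
        Madj c χ S * (starRingEnd ℂ) (Madj c χ S)
    = ∑ R ∈ Finset.powersetCard j (Finset.univ : Finset (Fin d)),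
          Mop c χ R * (starRingEnd ℂ) (Mop c χ R)
      + (∑ k, c k * (starRingEnd ℂ) (c k))
          * ∑ T ∈ Finset.powersetCard (j+1) (Finset.univ : Finset (Fin d)),
              χ T * (starRingEnd ℂ) (χ T)
      - 2 * ∑ T ∈ Finset.powersetCard (j+1) (Finset.univ : Finset (Fin d)),
              (∑ k ∈ T, c k * (starRingEnd ℂ) (c k)) * (χ T * (starRingEnd ℂ) (χ T)) := by
  classical
  set E : ℂ := ∑ R ∈ Finset.powersetCard j (Finset.univ : Finset (Fin d)),
      ∑ a ∈ Rᶜ, ∑ b ∈ Rᶜ.erase a,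
        ((starRingEnd ℂ) (c b) * χ (insert a R)) * (c a * (starRingEnd ℂ) (χ (insert b R)))
    with hE
  set t' : ℂ := ∑ T ∈ Finset.powersetCard (j+1) (Finset.univ : Finset (Fin d)),
      (∑ k ∈ T, c k * (starRingEnd ℂ) (c k)) * (χ T * (starRingEnd ℂ) (χ T)) with ht
  set l' : ℂ := ∑ T ∈ Finset.powersetCard (j+1) (Finset.univ : Finset (Fin d)),
      χ T * (starRingEnd ℂ) (χ T) with hl
  set nc : ℂ := ∑ k, c k * (starRingEnd ℂ) (c k) with hnc
  have claim1 : ∑ S ∈ Finset.powersetCard (j+1+1) (Finset.univ : Finset (Fin d)),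
      Madj c χ S * (starRingEnd ℂ) (Madj c χ S) = (nc * l' - t') + E := by
    have expand : ∀ S : Finset (Fin d), Madj c χ S * (starRingEnd ℂ) (Madj c χ S)
        = ∑ k ∈ S, ∑ l ∈ S, ((starRingEnd ℂ) (c k) * χ (S.erase k))
            * (c l * (starRingEnd ℂ) (χ (S.erase l))) := by
      intro S
      rw [Madj, map_sum, Finset.sum_mul_sum]
      refine Finset.sum_congr rfl fun k _ => Finset.sum_congr rfl fun l _ => ?_
      simp only [map_mul, Complex.conj_conj]
    have split : ∀ S : Finset (Fin d), Madj c χ S * (starRingEnd ℂ) (Madj c χ S)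
        = (∑ k ∈ S, ((starRingEnd ℂ) (c k) * χ (S.erase k)) * (c k * (starRingEnd ℂ) (χ (S.erase k))))
          + ∑ k ∈ S, ∑ l ∈ S.erase k, ((starRingEnd ℂ) (c k) * χ (S.erase k))
              * (c l * (starRingEnd ℂ) (χ (S.erase l))) := by
      intro S
      rw [expand S, ← Finset.sum_add_distrib]
      exact Finset.sum_congr rfl fun k hk => (Finset.add_sum_erase _ _ hk).symm
    rw [Finset.sum_congr rfl fun S _ => split S, Finset.sum_add_distrib]
    congr 1
    · -- diagonal part = nc * l' - t'
      rw [R1 (j+1) (fun k T => ((starRingEnd ℂ) (c k) * χ T) * (c k * (starRingEnd ℂ) (χ T)))]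
      have h2 : ∀ T ∈ Finset.powersetCard (j+1) (Finset.univ : Finset (Fin d)),
          ∑ k ∈ Tᶜ, ((starRingEnd ℂ) (c k) * χ T) * (c k * (starRingEnd ℂ) (χ T))
          = (nc - ∑ k ∈ T, c k * (starRingEnd ℂ) (c k)) * (χ T * (starRingEnd ℂ) (χ T)) := by
        intro T _
        have : ∑ k ∈ Tᶜ, ((starRingEnd ℂ) (c k) * χ T) * (c k * (starRingEnd ℂ) (χ T))
            = (∑ k ∈ Tᶜ, c k * (starRingEnd ℂ) (c k)) * (χ T * (starRingEnd ℂ) (χ T)) := by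
          rw [Finset.sum_mul]
          exact Finset.sum_congr rfl fun k _ => by ring
        rw [this, hnc, ← Finset.sum_add_sum_compl T (fun k => c k * (starRingEnd ℂ) (c k))]
        ring_nf
      rw [Finset.sum_congr rfl h2, hl, ht, Finset.mul_sum, ← Finset.sum_sub_distrib]
      exact Finset.sum_congr rfl fun T _ => by ring
    · -- off-diagonal part = E
      have rew1 : ∀ S ∈ Finset.powersetCard (j+1+1) (Finset.univ : Finset (Fin d)),
          ∑ k ∈ S, ∑ l ∈ S.erase k, ((starRingEnd ℂ) (c k) * χ (S.erase k))
              * (c l * (starRingEnd ℂ) (χ (S.erase l)))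
          = ∑ k ∈ S, (fun k T => ∑ l ∈ T, ((starRingEnd ℂ) (c k) * χ T)
              * (c l * (starRingEnd ℂ) (χ (insert k (T.erase l))))) k (S.erase k) := by
        intro S _
        refine Finset.sum_congr rfl fun k hk => Finset.sum_congr rfl fun l hl => ?_
        have hlk : l ≠ k := Finset.ne_of_mem_erase hl
        have hkSl : k ∈ S.erase l := Finset.mem_erase.2 ⟨hlk.symm, hk⟩
        have hkl : k ≠ l := Ne.symm hlk
        have hrw : S.erase l = insert k ((S.erase k).erase l) := by
          ext x
          simp only [Finset.mem_erase, Finset.mem_insert]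
          by_cases hxk : x = k
          · subst hxk; simp [hkl, hk]
          · simp only [hxk, false_or]; tauto
        rw [hrw]
      rw [Finset.sum_congr rfl rew1,
        R1 (j+1) (fun k T => ∑ l ∈ T, ((starRingEnd ℂ) (c k) * χ T)
          * (c l * (starRingEnd ℂ) (χ (insert k (T.erase l)))))]
      have rew2 : ∀ T ∈ Finset.powersetCard (j+1) (Finset.univ : Finset (Fin d)),
          ∑ k ∈ Tᶜ, ∑ l ∈ T, ((starRingEnd ℂ) (c k) * χ T)
              * (c l * (starRingEnd ℂ) (χ (insert k (T.erase l))))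
          = ∑ l ∈ T, (fun l R => ∑ k ∈ (insert l R)ᶜ, ((starRingEnd ℂ) (c k) * χ (insert l R))
              * (c l * (starRingEnd ℂ) (χ (insert k R))) ) l (T.erase l) := by
        intro T _
        rw [Finset.sum_comm]
        refine Finset.sum_congr rfl fun l hl => ?_
        simp only []
        rw [Finset.insert_erase hl]
      rw [Finset.sum_congr rfl rew2,
        R1 j (fun l R => ∑ k ∈ (insert l R)ᶜ, ((starRingEnd ℂ) (c k) * χ (insert l R))
          * (c l * (starRingEnd ℂ) (χ (insert k R))))]
      rw [hE]
      refine Finset.sum_congr rfl fun R _ => Finset.sum_congr rfl fun a ha => ?_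
      rw [Finset.compl_insert]
  have claim2 : ∑ R ∈ Finset.powersetCard j (Finset.univ : Finset (Fin d)),
      Mop c χ R * (starRingEnd ℂ) (Mop c χ R) = t' + E := by
    have expand : ∀ R : Finset (Fin d), Mop c χ R * (starRingEnd ℂ) (Mop c χ R)
        = ∑ k ∈ Rᶜ, ∑ l ∈ Rᶜ, (χ (insert k R) * c k)
            * ((starRingEnd ℂ) (χ (insert l R)) * (starRingEnd ℂ) (c l)) := by
      intro R
      rw [Mop_eq_compl, map_sum, Finset.sum_mul_sum]
      refine Finset.sum_congr rfl fun k _ => Finset.sum_congr rfl fun l _ => ?_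
      simp only [map_mul]
    have split : ∀ R : Finset (Fin d), Mop c χ R * (starRingEnd ℂ) (Mop c χ R)
        = (∑ k ∈ Rᶜ, (χ (insert k R) * c k)
            * ((starRingEnd ℂ) (χ (insert k R)) * (starRingEnd ℂ) (c k)))
          + ∑ k ∈ Rᶜ, ∑ l ∈ Rᶜ.erase k, (χ (insert k R) * c k)
            * ((starRingEnd ℂ) (χ (insert l R)) * (starRingEnd ℂ) (c l)) := by
      intro R
      rw [expand R, ← Finset.sum_add_distrib]
      exact Finset.sum_congr rfl fun k hk => (Finset.add_sum_erase _ _ hk).symm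
    rw [Finset.sum_congr rfl fun R _ => split R, Finset.sum_add_distrib]
    congr 1
    · -- diagonal = t'
      rw [← R1 j (fun k R => (χ (insert k R) * c k)
          * ((starRingEnd ℂ) (χ (insert k R)) * (starRingEnd ℂ) (c k)))]
      have h3 : ∀ S ∈ Finset.powersetCard (j+1) (Finset.univ : Finset (Fin d)),
          ∑ k ∈ S, (χ (insert k (S.erase k)) * c k)
            * ((starRingEnd ℂ) (χ (insert k (S.erase k))) * (starRingEnd ℂ) (c k))
          = (∑ k ∈ S, c k * (starRingEnd ℂ) (c k)) * (χ S * (starRingEnd ℂ) (χ S)) := by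
        intro S _
        rw [Finset.sum_mul]
        refine Finset.sum_congr rfl fun k hk => ?_
        rw [Finset.insert_erase hk]
        ring
      rw [Finset.sum_congr rfl h3, ht]
    · -- off-diagonal = E
      rw [hE]
      refine Finset.sum_congr rfl fun R _ => Finset.sum_congr rfl fun a _ =>
        Finset.sum_congr rfl fun b _ => by ring
  rw [claim1, claim2]
  ring

lemma star_identity (c : Fin d → ℂ) (χ : Finset (Fin d) → ℂ) (j : ℕ) :
    ∑ S ∈ Finset.powersetCard (j+1+1) (Finset.univ : Finset (Fin d)),
        ‖Madj c χ S‖ ^ 2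
    = ∑ R ∈ Finset.powersetCard j (Finset.univ : Finset (Fin d)),
          ‖Mop c χ R‖ ^ 2
      + (∑ k, ‖c k‖ ^ 2)
          * ∑ T ∈ Finset.powersetCard (j+1) (Finset.univ : Finset (Fin d)),
              ‖χ T‖ ^ 2
      - 2 * ∑ T ∈ Finset.powersetCard (j+1) (Finset.univ : Finset (Fin d)),
              (∑ k ∈ T, ‖c k‖ ^ 2) * ‖χ T‖ ^ 2 := by
  have e : ∀ z : ℂ, z * (starRingEnd ℂ) z = ((‖z‖ ^ 2 : ℝ) : ℂ) := fun z => by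
    rw [Complex.mul_conj, Complex.sq_norm]
  have h := star_identity_c c χ j
  simp only [e] at h
  exact_mod_cast h

lemma cs1 (c : Fin d → ℂ) (A : Finset (Fin d) → ℂ) (j : ℕ) :
    (∑ T ∈ Finset.powersetCard (j+1) (Finset.univ : Finset (Fin d)),
        ‖Mop c A T‖ ^ 2) ^ 2
    ≤ (∑ S ∈ Finset.powersetCard (j+1+1) (Finset.univ : Finset (Fin d)),
          ‖Madj c (Mop c A) S‖ ^ 2)
      * (∑ S ∈ Finset.powersetCard (j+1+1) (Finset.univ : Finset (Fin d)),
          ‖A S‖ ^ 2) := by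
  have e : ∀ z : ℂ, (starRingEnd ℂ) z * z = ((‖z‖ ^ 2 : ℝ) : ℂ) := fun z => by
    rw [mul_comm, Complex.mul_conj, Complex.sq_norm]
  have hadj := adjoint_eq c A (Mop c A) j
  have h0 : (0:ℝ) ≤ ∑ T ∈ Finset.powersetCard (j+1) (Finset.univ : Finset (Fin d)),
      ‖Mop c A T‖ ^ 2 := by positivity
  have hlamc : ((∑ T ∈ Finset.powersetCard (j+1) (Finset.univ : Finset (Fin d)),
        ‖Mop c A T‖ ^ 2 : ℝ) : ℂ)
      = ∑ S ∈ Finset.powersetCard (j+1+1) (Finset.univ : Finset (Fin d)),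
        (starRingEnd ℂ) (Madj c (Mop c A) S) * A S := by
    rw [← hadj]
    push_cast
    refine Finset.sum_congr rfl fun T _ => ?_
    rw [← Complex.ofReal_pow]
    exact (e _).symm
  have h2 : ‖((∑ T ∈ Finset.powersetCard (j+1) (Finset.univ : Finset (Fin d)),
        ‖Mop c A T‖ ^ 2 : ℝ) : ℂ)‖
      ≤ ∑ S ∈ Finset.powersetCard (j+1+1) (Finset.univ : Finset (Fin d)),
          ‖Madj c (Mop c A) S‖ * ‖A S‖ := by
    rw [hlamc]
    refine le_trans (norm_sum_le _ _) (le_of_eq ?_)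
    exact Finset.sum_congr rfl fun S _ => by rw [norm_mul, Complex.norm_conj]
  have h4 : (∑ T ∈ Finset.powersetCard (j+1) (Finset.univ : Finset (Fin d)),
        ‖Mop c A T‖ ^ 2)
      ≤ ∑ S ∈ Finset.powersetCard (j+1+1) (Finset.univ : Finset (Fin d)),
          ‖Madj c (Mop c A) S‖ * ‖A S‖ := by
    refine le_trans (le_of_eq ?_) h2
    rw [Complex.norm_real, Real.norm_of_nonneg h0]
  refine le_trans (pow_le_pow_left₀ h0 h4 2) ?_
  exact Finset.sum_mul_sq_le_sq_mul_sq _ _ _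

lemma cs2 (c : Fin d → ℂ) (χ : Finset (Fin d) → ℂ) (j : ℕ) :
    ∑ R ∈ Finset.powersetCard j (Finset.univ : Finset (Fin d)),
        ‖Mop c χ R‖ ^ 2
    ≤ ((d - j : ℕ) : ℝ) * ∑ T ∈ Finset.powersetCard (j+1) (Finset.univ : Finset (Fin d)),
        (∑ k ∈ T, ‖c k‖ ^ 2) * ‖χ T‖ ^ 2 := by
  have step1 : ∀ R ∈ Finset.powersetCard j (Finset.univ : Finset (Fin d)),
      ‖Mop c χ R‖ ^ 2
      ≤ ((d - j : ℕ) : ℝ) * ∑ k ∈ Rᶜ, ‖χ (insert k R) * c k‖ ^ 2 := by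
    intro R hR
    have hcard : (Rᶜ : Finset (Fin d)).card = d - j := by
      rw [Finset.card_compl, Finset.mem_powersetCard_univ.1 hR, Fintype.card_fin]
    have habs : ‖Mop c χ R‖ ≤ ∑ k ∈ Rᶜ, ‖χ (insert k R) * c k‖ := by
      rw [Mop_eq_compl]
      exact norm_sum_le _ _
    have h4 : ‖Mop c χ R‖ ^ 2
        ≤ (∑ k ∈ Rᶜ, ‖χ (insert k R) * c k‖) ^ 2 :=
      pow_le_pow_left₀ (norm_nonneg _) habs 2
    refine le_trans h4 (le_trans sq_sum_le_card_mul_sum_sq (le_of_eq ?_))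
    rw [hcard]
  refine le_trans (Finset.sum_le_sum step1) (le_of_eq ?_)
  rw [← Finset.mul_sum]
  congr 1
  rw [← R1 j (fun k R => ‖χ (insert k R) * c k‖ ^ 2)]
  refine Finset.sum_congr rfl fun S _ => ?_
  rw [Finset.sum_mul]
  refine Finset.sum_congr rfl fun k hk => ?_
  rw [Finset.insert_erase hk, norm_mul]
  ring

lemma claimC (hd : 1 ≤ d) (c : Fin d → ℂ) : ∀ j : ℕ, ∀ A : Finset (Fin d) → ℂ,
    ∑ T ∈ Finset.powersetCard j (Finset.univ : Finset (Fin d)),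
        ‖Mop c A T‖ ^ 2
    ≤ (((j:ℝ)+1) * ((d:ℝ) - (j:ℝ)) / (d:ℝ))
      * (∑ S ∈ Finset.powersetCard (j+1) (Finset.univ : Finset (Fin d)),
          ‖A S‖ ^ 2)
      * (∑ k, ‖c k‖ ^ 2) := by
  have hD0 : (0:ℝ) < (d:ℝ) := by exact_mod_cast hd
  intro j
  induction j with
  | zero =>
    intro A
    rw [Finset.powersetCard_zero, Finset.sum_singleton]
    have hM : Mop c A ∅ = ∑ k, A {k} * c k := by
      rw [Mop]
      refine Finset.sum_congr rfl fun k _ => ?_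
      simp
    have hub : ‖Mop c A ∅‖ ^ 2
        ≤ (∑ k, ‖A {k}‖ ^ 2) * (∑ k, ‖c k‖ ^ 2) := by
      rw [hM]
      have h1 : ‖∑ k, A {k} * c k‖ ≤ ∑ k, ‖A {k}‖ * ‖c k‖ := by
        refine le_trans (norm_sum_le _ _) (le_of_eq ?_)
        exact Finset.sum_congr rfl fun k _ => norm_mul _ _
      refine le_trans (pow_le_pow_left₀ (norm_nonneg _) h1 2) ?_
      exact Finset.sum_mul_sq_le_sq_mul_sq _ _ _
    have hsing : ∑ S ∈ Finset.powersetCard (0+1) (Finset.univ : Finset (Fin d)),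
        ‖A S‖ ^ 2 = ∑ k, ‖A {k}‖ ^ 2 := by
      rw [Finset.powersetCard_one, Finset.sum_map]
      rfl
    rw [hsing]
    have hcoef : (((0:ℕ):ℝ)+1) * ((d:ℝ) - ((0:ℕ):ℝ)) / (d:ℝ) = 1 := by
      push_cast
      field_simp
      ring
    rw [hcoef, one_mul]
    exact hub
  | succ j ih =>
    intro A
    by_cases hjd : j + 2 ≤ d
    · -- main inductive case
      set lam : ℝ := ∑ T ∈ Finset.powersetCard (j+1) (Finset.univ : Finset (Fin d)),
          ‖Mop c A T‖ ^ 2 with hlam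
      set nA : ℝ := ∑ S ∈ Finset.powersetCard (j+1+1) (Finset.univ : Finset (Fin d)),
          ‖A S‖ ^ 2 with hnA
      set nc : ℝ := ∑ k, ‖c k‖ ^ 2 with hnc
      set q : ℝ := ∑ R ∈ Finset.powersetCard j (Finset.univ : Finset (Fin d)),
          ‖Mop c (Mop c A) R‖ ^ 2 with hq
      set t : ℝ := ∑ T ∈ Finset.powersetCard (j+1) (Finset.univ : Finset (Fin d)),
          (∑ k ∈ T, ‖c k‖ ^ 2) * ‖Mop c A T‖ ^ 2 with htd
      have hlam0 : 0 ≤ lam := by rw [hlam]; positivity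
      have hnA0 : 0 ≤ nA := by rw [hnA]; positivity
      have hnc0 : 0 ≤ nc := by rw [hnc]; positivity
      have hq0 : 0 ≤ q := by rw [hq]; positivity
      have ht0 : 0 ≤ t := by
        rw [htd]
        refine Finset.sum_nonneg fun T _ => mul_nonneg (Finset.sum_nonneg fun k _ => by positivity) (by positivity)
      set D : ℝ := (d:ℝ) with hDdef
      set J : ℝ := (j:ℝ) with hJdef
      have hD2 : J + 2 ≤ D := by rw [hDdef, hJdef]; exact_mod_cast hjd
      have hDJ : (0:ℝ) < D - J := by linarith
      have h1 : lam ^ 2 ≤ (∑ S ∈ Finset.powersetCard (j+1+1) (Finset.univ : Finset (Fin d)),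
          ‖Madj c (Mop c A) S‖ ^ 2) * nA := cs1 c A j
      have h2 := star_identity c (Mop c A) j
      have e1 : lam ^ 2 ≤ (q + nc * lam - 2 * t) * nA := by
        rw [h2] at h1
        exact h1
      have h3 : q ≤ (D - J) * t := by
        have := cs2 c (Mop c A) j
        have hcast : ((d - j : ℕ) : ℝ) = D - J := by
          rw [hDdef, hJdef]
          have : j ≤ d := by omega
          push_cast [this]
          ring
        rw [hcast] at this
        exact this
      have h4 : q ≤ ((J+1) * (D - J) / D) * lam * nc := by
        have h := ih (Mop c A)
        calc q ≤ ((J + 1) * (D - J) / D * ∑ S ∈ Finset.powersetCard (j + 1)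
              (Finset.univ : Finset (Fin d)), ‖Mop c A S‖ ^ 2) * nc := h
          _ = ((J+1) * (D - J) / D) * lam * nc := by rw [hlam]
      have e3 : (D - J) * (q + nc * lam - 2 * t) ≤ (D - J - 2) * q + (D - J) * (nc * lam) := by
        have expand : (D - J) * (q + nc * lam - 2 * t)
            = (D-J)*q + (D-J)*(nc*lam) - 2*((D-J)*t) := by ring
        have expand2 : (D - J - 2) * q + (D - J) * (nc * lam)
            = (D-J)*q + (D-J)*(nc*lam) - 2*q := by ring
        rw [expand, expand2]
        linarith [h3]
      have e4 : (D - J - 2) * q ≤ (D - J - 2) * (((J+1) * (D - J) / D) * lam * nc) :=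
        mul_le_mul_of_nonneg_left h4 (by linarith)
      have e5 : (D - J) * lam ^ 2
          ≤ ((D - J - 2) * (((J+1) * (D - J) / D) * lam * nc) + (D - J) * (nc * lam)) * nA := by
        calc (D - J) * lam ^ 2 ≤ (D - J) * ((q + nc * lam - 2 * t) * nA) :=
              mul_le_mul_of_nonneg_left e1 hDJ.le
          _ = ((D - J) * (q + nc * lam - 2 * t)) * nA := by ring
          _ ≤ ((D - J - 2) * (((J+1) * (D - J) / D) * lam * nc) + (D - J) * (nc * lam)) * nA := by
              refine mul_le_mul_of_nonneg_right (le_trans e3 ?_) hnA0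
              linarith [e4]
      have e6 : (D - J) * lam ^ 2
          ≤ (D - J) * ((((J+2) * (D - J - 1) / D) * nA * nc) * lam) := by
        refine le_trans e5 (le_of_eq ?_)
        have hD0' : D ≠ 0 := ne_of_gt hD0
        field_simp
        ring
      have e7 : lam ^ 2 ≤ (((J+2) * (D - J - 1) / D) * nA * nc) * lam :=
        le_of_mul_le_mul_left e6 hDJ
      have final : lam ≤ ((J+2) * (D - J - 1) / D) * nA * nc := by
        rcases eq_or_lt_of_le hlam0 with h | h
        · rw [← h]
          have hc : 0 ≤ (J+2) * (D - J - 1) / D := by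
            have : (0:ℝ) ≤ J := by rw [hJdef]; positivity
            have h5 : (0:ℝ) < J + 2 := by linarith
            have h6 : (0:ℝ) ≤ D - J - 1 := by linarith
            positivity
          positivity
        · rw [pow_two] at e7
          exact le_of_mul_le_mul_right (by linarith [e7]) h
      refine le_trans final (le_of_eq ?_)
      rw [hDdef, hJdef]
      push_cast
      ring
    · -- degenerate case : j + 2 > d
      have hd1 : d ≤ j + 1 := by omega
      rcases eq_or_lt_of_le hd1 with heq | hlt
      · -- d = j + 1
        have hcard : j + 1 = (Finset.univ : Finset (Fin d)).card := by
          rw [Finset.card_univ, Fintype.card_fin, heq]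
        have hLHS : ∑ T ∈ Finset.powersetCard (j+1) (Finset.univ : Finset (Fin d)),
            ‖Mop c A T‖ ^ 2 = 0 := by
          rw [hcard, Finset.powersetCard_self, Finset.sum_singleton]
          have : Mop c A Finset.univ = 0 := by
            rw [Mop]
            simp
          rw [this]
          simp
        rw [hLHS]
        have hzero : ((d:ℝ) - ((j+1:ℕ):ℝ)) = 0 := by
          rw [heq]
          push_cast
          ring
        have : (((j+1:ℕ):ℝ)+1) * ((d:ℝ) - ((j+1:ℕ):ℝ)) / (d:ℝ)
            * (∑ S ∈ Finset.powersetCard (j+1+1) (Finset.univ : Finset (Fin d)),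
                ‖A S‖ ^ 2)
            * (∑ k, ‖c k‖ ^ 2) = 0 := by
          rw [hzero]
          ring
        rw [this]
      · -- d < j + 1
        have hLHS : ∑ T ∈ Finset.powersetCard (j+1) (Finset.univ : Finset (Fin d)),
            ‖Mop c A T‖ ^ 2 = 0 := by
          rw [Finset.powersetCard_eq_empty.2 (by simpa using hlt), Finset.sum_empty]
        have hnAz : ∑ S ∈ Finset.powersetCard (j+1+1) (Finset.univ : Finset (Fin d)),
            ‖A S‖ ^ 2 = 0 := by
          rw [Finset.powersetCard_eq_empty.2 (by simp; omega), Finset.sum_empty]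
        rw [hLHS, hnAz]
        ring_nf
        exact le_refl 0



theorem stmt0 (d N : ℕ) (hd : 1 ≤ d) (hN1 : 1 ≤ N) (hNd : N ≤ d)
    (A : Finset (Fin d) → ℂ)
    (hA : ∑ S ∈ Finset.powersetCard N (Finset.univ : Finset (Fin d)),
        ‖A S‖ ^ 2 = 1)
    (c : Fin d → ℂ) (hc : ∑ k, ‖c k‖ ^ 2 = 1) :
    ∑ T ∈ Finset.powersetCard (N - 1) (Finset.univ : Finset (Fin d)),
      ‖∑ k, (starRingEnd ℂ) (if k ∈ T then 0 else A (insert k T)) * c k‖ ^ 2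
      ≤ ((N : ℝ) / d) * ((d : ℝ) - N + 1) := by
  have hN : N - 1 + 1 = N := by omega
  have hrw : ∀ T : Finset (Fin d),
      (∑ k, (starRingEnd ℂ) (if k ∈ T then 0 else A (insert k T)) * c k)
      = Mop c (fun S => (starRingEnd ℂ) (A S)) T := by
    intro T
    rw [Mop]
    refine Finset.sum_congr rfl fun k _ => ?_
    congr 1
    split <;> simp
  have key := claimC hd c (N-1) (fun S => (starRingEnd ℂ) (A S))
  rw [hN] at key
  have hnA' : ∑ S ∈ Finset.powersetCard N (Finset.univ : Finset (Fin d)),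
      ‖(starRingEnd ℂ) (A S)‖ ^ 2 = 1 := by
    rw [← hA]
    exact Finset.sum_congr rfl fun S _ => by rw [Complex.norm_conj]
  rw [hnA', hc] at key
  have hLHS : ∑ T ∈ Finset.powersetCard (N - 1) (Finset.univ : Finset (Fin d)),
      ‖∑ k, (starRingEnd ℂ) (if k ∈ T then 0 else A (insert k T)) * c k‖ ^ 2
      = ∑ T ∈ Finset.powersetCard (N - 1) (Finset.univ : Finset (Fin d)),
        ‖Mop c (fun S => (starRingEnd ℂ) (A S)) T‖ ^ 2 :=
    Finset.sum_congr rfl fun T _ => by rw [hrw T]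
  rw [hLHS]
  refine le_trans key (le_of_eq ?_)
  have hcast : ((N - 1 : ℕ) : ℝ) = (N:ℝ) - 1 := by
    push_cast [hN1]
    ring
  rw [hcast]
  ring
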